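/- Let w ≥ 1 and consider the planar ODE ẋ = x(1−x)((w+1)y − w), ẏ = y(1−y)((w+1)x − w) on (0,1)². Along every solution (x(t), y(t)) : ℝ → (0,1)², the quantity w·ln x(t) + ln(1 − x(t)) − w·ln y(t) − ln(1 − y(t)) is constant in t; equivalently, the ratio x(t)^w (1 − x(t)) / (y(t)^w (1 − y(t))) is invariant along trajectories. -/

import Mathlib

open Filter Topology Set

/-- **Invariant of the replicator dynamics of the coordination game `G(w)`.**
For `w ≥ 1` and the planar ODE `ẋ = x(1-x)((w+1)y - w)`, `ẏ = y(1-y)((w+1)x - w)`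
on `(0,1)²`, the quantity `w·ln x + ln(1-x) - w·ln y - ln(1-y)` is constant along
every solution; equivalently `x^w (1-x) / (y^w (1-y))` is invariant. -/
theorem Gw_replicator_invariant
    (w : ℝ) (hw : 1 ≤ w) (x y : ℝ → ℝ)
    (hmem : ∀ t : ℝ, x t ∈ Ioo (0:ℝ) 1 ∧ y t ∈ Ioo (0:ℝ) 1)
    (hx : ∀ t : ℝ, HasDerivAt x (x t * (1 - x t) * ((w + 1) * y t - w)) t)
    (hy : ∀ t : ℝ, HasDerivAt y (y t * (1 - y t) * ((w + 1) * x t - w)) t) :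
    (∀ s t : ℝ,
      w * Real.log (x s) + Real.log (1 - x s)
        - w * Real.log (y s) - Real.log (1 - y s) =
      w * Real.log (x t) + Real.log (1 - x t)
        - w * Real.log (y t) - Real.log (1 - y t)) ∧
    (∀ s t : ℝ,
      x s ^ w * (1 - x s) / (y s ^ w * (1 - y s)) =
      x t ^ w * (1 - x t) / (y t ^ w * (1 - y t))) := by
  set H : ℝ → ℝ := fun t =>
    w * Real.log (x t) + Real.log (1 - x t)
      - w * Real.log (y t) - Real.log (1 - y t) with hH
  have hx0 : ∀ t, 0 < x t := fun t => (hmem t).1.1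
  have hx1 : ∀ t, x t < 1 := fun t => (hmem t).1.2
  have hy0 : ∀ t, 0 < y t := fun t => (hmem t).2.1
  have hy1 : ∀ t, y t < 1 := fun t => (hmem t).2.2
  have hderiv : ∀ t : ℝ, HasDerivAt H 0 t := by
    intro t
    have h1x : (0:ℝ) < 1 - x t := by linarith [hx1 t]
    have h1y : (0:ℝ) < 1 - y t := by linarith [hy1 t]
    have d1 : HasDerivAt (fun t => Real.log (x t))
        (x t * (1 - x t) * ((w + 1) * y t - w) / x t) t :=
      (hx t).log (hx0 t).ne'
    have d2 : HasDerivAt (fun t => Real.log (1 - x t))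
        (-(x t * (1 - x t) * ((w + 1) * y t - w)) / (1 - x t)) t :=
      (((hasDerivAt_const t (1:ℝ)).sub (hx t)).log h1x.ne').congr_deriv (by simp only [Pi.sub_apply]; ring)
    have d3 : HasDerivAt (fun t => Real.log (y t))
        (y t * (1 - y t) * ((w + 1) * x t - w) / y t) t :=
      (hy t).log (hy0 t).ne'
    have d4 : HasDerivAt (fun t => Real.log (1 - y t))
        (-(y t * (1 - y t) * ((w + 1) * x t - w)) / (1 - y t)) t :=
      (((hasDerivAt_const t (1:ℝ)).sub (hy t)).log h1y.ne').congr_deriv (by simp only [Pi.sub_apply]; ring)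
    have c1 : x t * (1 - x t) * ((w + 1) * y t - w) / x t
        = (1 - x t) * ((w + 1) * y t - w) := by
      rw [div_eq_iff (hx0 t).ne']; ring
    have c2 : -(x t * (1 - x t) * ((w + 1) * y t - w)) / (1 - x t)
        = -(x t * ((w + 1) * y t - w)) := by
      rw [div_eq_iff h1x.ne']; ring
    have c3 : y t * (1 - y t) * ((w + 1) * x t - w) / y t
        = (1 - y t) * ((w + 1) * x t - w) := by
      rw [div_eq_iff (hy0 t).ne']; ring
    have c4 : -(y t * (1 - y t) * ((w + 1) * x t - w)) / (1 - y t)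
        = -(y t * ((w + 1) * x t - w)) := by
      rw [div_eq_iff h1y.ne']; ring
    have D := (((d1.const_mul w).add d2).sub (d3.const_mul w)).sub d4
    rw [c1, c2, c3, c4] at D
    exact D.congr_deriv (by ring)
  have hconst : ∀ s t : ℝ, H s = H t := fun s t =>
    is_const_of_deriv_eq_zero (fun z => (hderiv z).differentiableAt)
      (fun z => (hderiv z).deriv) s t
  refine ⟨hconst, ?_⟩
  intro s t
  have key := hconst s t
  have e : ∀ u : ℝ, x u ^ w * (1 - x u) / (y u ^ w * (1 - y u)) = Real.exp (H u) := by
    intro u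
    have h1x : (0:ℝ) < 1 - x u := by linarith [hx1 u]
    have h1y : (0:ℝ) < 1 - y u := by linarith [hy1 u]
    rw [hH]
    rw [Real.exp_sub, Real.exp_sub, Real.exp_add, Real.exp_log h1x, Real.exp_log h1y,
      mul_comm w (Real.log (x u)), Real.exp_mul, Real.exp_log (hx0 u),
      mul_comm w (Real.log (y u)), Real.exp_mul, Real.exp_log (hy0 u)]
    rw [div_div]
  rw [e s, e t, key]
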